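/- Let V = ℝ ⊕ ℝ ⊕ ℂ, W = ℝ ⊕ ℂ, and T₀′ : V → W the map T₀′(t,r,z) = (Im z, c₀ t + i r) with c₀ ≠ 0 real. For s ≠ 0, the family T̂_s = s·T₀′ has ker T̂_s equal to the fixed real line spanned by v = (0,0,1). The pullback under T₀′ of the orientation γ ∧ v ∧ iv of W (in the basis identification) equals (1/c₀)·(iv ∧ τ ∧ γ); consequently the induced orientation on ker T̂_s is −sign(c₀) times the standard one: o′(V) = −(1/(s³ c₀))·o(V) for s > 0. -/

import Mathlib

open ExteriorAlgebra

/-- Basis vectors of `V = ℝ{τ} ⊕ ℝ{γ} ⊕ ℂ{v}`: `τ`, `γ`, `v`, `iv`. -/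
noncomputable def τV : ℝ × ℝ × ℂ := (1, 0, 0)
noncomputable def γV : ℝ × ℝ × ℂ := (0, 1, 0)
noncomputable def vV : ℝ × ℝ × ℂ := (0, 0, 1)
noncomputable def ivV : ℝ × ℝ × ℂ := (0, 0, Complex.I)

/-- Basis vectors of `W = ℝ{γ} ⊕ ℂ{v}`: `γ`, `v`, `iv`. -/
noncomputable def γW : ℝ × ℂ := (1, 0)
noncomputable def vW : ℝ × ℂ := (0, 1)
noncomputable def ivW : ℝ × ℂ := (0, Complex.I)

/-- Anticommutation of degree-one elements in the exterior algebra. -/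
lemma aux_swap {M : Type*} [AddCommGroup M] [Module ℝ M] (x y : M) :
    ι ℝ x * ι ℝ y = -(ι ℝ y * ι ℝ x) :=
  eq_neg_of_add_eq_zero_left (ι_add_mul_swap x y)

/-- A degree-one element commutes with any element up to the grade involution. -/
lemma aux_comm {M : Type*} [AddCommGroup M] [Module ℝ M] (x : M)
    (a : ExteriorAlgebra ℝ M) :
    ι ℝ x * a = CliffordAlgebra.involute a * ι ℝ x := by
  induction a using ExteriorAlgebra.induction with
  | algebraMap r => rw [AlgHom.commutes, Algebra.commutes]
  | ι y => rw [CliffordAlgebra.involute_ι, aux_swap, neg_mul]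
  | mul a b ha hb => rw [map_mul, ← mul_assoc, ha, mul_assoc, hb, ← mul_assoc]
  | add a b ha hb => rw [map_add, mul_add, add_mul, ha, hb]

/-- A product of two degree-one elements commutes with degree-one elements. -/
lemma aux_pair_comm {M : Type*} [AddCommGroup M] [Module ℝ M] (x y z : M) :
    ι ℝ x * ι ℝ y * ι ℝ z = ι ℝ z * (ι ℝ x * ι ℝ y) := by
  rw [mul_assoc, aux_swap y z, mul_neg, ← mul_assoc, aux_swap x z, neg_mul, neg_neg, mul_assoc]

/-- A linear section of `s • T₀′` annihilating the kernel direction `v`. -/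
noncomputable def σmap (s c₀ : ℝ) : (ℝ × ℂ) →ₗ[ℝ] ℝ × ℝ × ℂ where
  toFun p := (p.2.re / (s * c₀), p.2.im / s, ((p.1 / s : ℝ) : ℂ) * Complex.I)
  map_add' p q := by
    simp only [Prod.fst_add, Prod.snd_add, Complex.add_re, Complex.add_im, Prod.mk_add_mk,
      Prod.ext_iff]
    push_cast
    refine ⟨by ring, by ring, by ring⟩
  map_smul' c p := by
    simp only [Prod.smul_fst, Prod.smul_snd, smul_eq_mul, RingHom.id_apply, Prod.smul_mk,
      Complex.real_smul, Complex.mul_re, Complex.mul_im, Complex.ofReal_re, Complex.ofReal_im,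
      Prod.ext_iff]
    push_cast
    refine ⟨by ring, by ring, by ring⟩

lemma σmap_apply (s c₀ : ℝ) (p : ℝ × ℂ) :
    σmap s c₀ p = (p.2.re / (s * c₀), p.2.im / s, ((p.1 / s : ℝ) : ℂ) * Complex.I) := rfl

set_option maxHeartbeats 1000000 in
/-- Lemma 5.4 orientation computation: for the map
`T₀′(t,r,z) = (Im z, c₀t + ir)` with `c₀ ≠ 0`, the kernel of `T̂_s = s·T₀′`
(`s ≠ 0`) is the fixed real line spanned by `v`; the exterior-power identity
`Λ³T₀′(iv ∧ τ ∧ γ) = c₀·(γ ∧ v ∧ iv)` holds (equivalently the pullback of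
`γ ∧ v ∧ iv` is `(1/c₀)·(iv ∧ τ ∧ γ)`); and consequently, for `s > 0` and any `w`
with `Λ(s·T₀′) w = γ ∧ v ∧ iv`, the induced orientation satisfies
`−(v ∧ w) = −(1/(s³c₀))·(τ ∧ γ ∧ v ∧ iv)`, i.e. it is `−sign(c₀)` times the
standard one. -/
theorem bifurcation_orientation_sign (c₀ : ℝ) (hc₀ : c₀ ≠ 0)
    (T : (ℝ × ℝ × ℂ) →ₗ[ℝ] ℝ × ℂ)
    (hT : ∀ (t r : ℝ) (z : ℂ),
      T (t, r, z) = ((Complex.I * (starRingEnd ℂ) z).re,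
        ((c₀ * t : ℝ) : ℂ) + Complex.I * (r : ℂ))) :
    (∀ s : ℝ, s ≠ 0 →
      LinearMap.ker (s • T) = Submodule.span ℝ {vV}) ∧
    (ExteriorAlgebra.map T (ι ℝ ivV * ι ℝ τV * ι ℝ γV)
      = c₀ • (ι ℝ γW * ι ℝ vW * ι ℝ ivW)) ∧
    (∀ s : ℝ, 0 < s → ∀ w : ExteriorAlgebra ℝ (ℝ × ℝ × ℂ),
      ExteriorAlgebra.map (s • T) w = ι ℝ γW * ι ℝ vW * ι ℝ ivW →
      -(ι ℝ vV * w)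
        = (-(1 / (s ^ 3 * c₀))) • (ι ℝ τV * ι ℝ γV * ι ℝ vV * ι ℝ ivV)) := by
  refine ⟨?_, ?_, ?_⟩
  · -- Part 1: the kernel of `s • T` is the line spanned by `v`.
    intro s hs
    ext x
    obtain ⟨t, r, z⟩ := x
    rw [LinearMap.mem_ker, Submodule.mem_span_singleton]
    constructor
    · intro h
      rw [LinearMap.smul_apply, hT] at h
      rw [smul_eq_zero] at h
      rw [or_iff_right hs, Prod.ext_iff] at h
      obtain ⟨h1, h2⟩ := h
      simp only [Complex.mul_re, Complex.I_re, Complex.I_im, RingHomCompTriple.comp_apply] at h1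
      have hzim : z.im = 0 := by
        simpa [Complex.conj_re, Complex.conj_im] using h1
      have h2re := congrArg Complex.re h2
      have h2im := congrArg Complex.im h2
      simp [Complex.add_re, Complex.add_im, Complex.mul_re, Complex.mul_im] at h2re h2im
      refine ⟨z.re, ?_⟩
      have ht : t = 0 := by
        rcases h2re with h | h
        · exact absurd h hc₀
        · exact h
      simp [vV, Prod.ext_iff, ht, h2im, Complex.ext_iff, hzim, Complex.real_smul]
    · rintro ⟨a, ha⟩
      rw [Prod.ext_iff, Prod.ext_iff] at ha
      simp only [vV] at ha
      obtain ⟨h1, h2, h3⟩ := ha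
      rw [LinearMap.smul_apply, hT]
      have : (starRingEnd ℂ) z = z := by
        rw [← h3]; simp [Complex.ext_iff, Complex.real_smul]
      rw [this, ← h3, ← h1, ← h2]
      simp [Complex.ext_iff, Complex.real_smul]
  · -- Part 2: `Λ³T₀′(iv ∧ τ ∧ γ) = c₀ · (γ ∧ v ∧ iv)`.
    have h1 : T ivV = γW := by
      rw [show ivV = ((0:ℝ), (0:ℝ), Complex.I) from rfl, hT]
      simp [γW, Complex.ext_iff]
    have h2 : T τV = c₀ • vW := by
      rw [show τV = ((1:ℝ), (0:ℝ), (0:ℂ)) from rfl, hT]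
      simp [vW, Complex.ext_iff, Prod.ext_iff, Complex.real_smul]
    have h3 : T γV = ivW := by
      rw [show γV = ((0:ℝ), (1:ℝ), (0:ℂ)) from rfl, hT]
      simp [ivW, Complex.ext_iff]
    rw [map_mul, map_mul, map_apply_ι, map_apply_ι, map_apply_ι, h1, h2, h3,
      map_smul, mul_smul_comm, smul_mul_assoc]
  · -- Part 3: the orientation comparison.
    intro s hs w hw
    have hs' : s ≠ 0 := ne_of_gt hs
    have hsec : ∀ x : ℝ × ℝ × ℂ, σmap s c₀ ((s • T) x) = x - x.2.2.re • vV := by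
      rintro ⟨t, r, z⟩
      rw [LinearMap.smul_apply, hT, σmap_apply]
      simp only [Prod.smul_fst, Prod.smul_snd, smul_eq_mul, Complex.real_smul, vV, Prod.smul_mk,
        Prod.mk_sub_mk, Prod.ext_iff, Complex.mul_re, Complex.mul_im, Complex.ofReal_re,
        Complex.ofReal_im, Complex.I_re, Complex.I_im, Complex.add_re, Complex.add_im,
        Complex.conj_re, Complex.conj_im, smul_zero, sub_zero, smul_eq_mul, mul_zero, mul_one,
        zero_mul, one_mul, zero_sub, sub_neg_eq_add, zero_add, add_zero, neg_neg]
      refine ⟨by field_simp, by field_simp, ?_⟩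
      rw [Complex.ext_iff]
      simp only [Complex.mul_re, Complex.mul_im, Complex.ofReal_re, Complex.ofReal_im,
        Complex.I_re, Complex.I_im, Complex.sub_re, Complex.sub_im, Complex.smul_re,
        Complex.smul_im, Complex.one_re, Complex.one_im, smul_eq_mul, mul_zero, mul_one,
        zero_mul, zero_sub, sub_zero]
      exact ⟨by ring, by field_simp; ring⟩
    have key : ∀ u : ExteriorAlgebra ℝ (ℝ × ℝ × ℂ),
        ι ℝ vV * u
          = ι ℝ vV * (ExteriorAlgebra.map (σmap s c₀) (ExteriorAlgebra.map (s • T) u)) := by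
      intro u
      induction u using ExteriorAlgebra.induction with
      | algebraMap r => rw [AlgHom.commutes, AlgHom.commutes]
      | ι x =>
        rw [map_apply_ι, map_apply_ι, hsec x]
        rw [map_sub, map_smul, mul_sub, mul_smul_comm, ι_sq_zero, smul_zero, sub_zero]
      | mul a b ha hb =>
        rw [map_mul, map_mul, ← mul_assoc, ha, aux_comm, mul_assoc, hb, ← mul_assoc, ← aux_comm,
          mul_assoc]
      | add a b ha hb => rw [map_add, map_add, mul_add, mul_add, ha, hb]
    have hγ : σmap s c₀ γW = (1 / s) • ivV := by
      rw [σmap_apply]; simp [γW, ivV, Prod.ext_iff, Complex.real_smul, one_div]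
    have hv : σmap s c₀ vW = (1 / (s * c₀)) • τV := by
      rw [σmap_apply]; simp [vW, τV, Prod.ext_iff, one_div]
    have hiv : σmap s c₀ ivW = (1 / s) • γV := by
      rw [σmap_apply]; simp [ivW, γV, Prod.ext_iff, one_div]
    have hcalc : ι ℝ vV * w
        = (1 / (s ^ 3 * c₀)) • (ι ℝ vV * (ι ℝ ivV * (ι ℝ τV * ι ℝ γV))) := by
      rw [key w, hw]
      simp only [map_mul, map_apply_ι, hγ, hv, hiv, map_smul, smul_mul_assoc, mul_smul_comm,
        smul_smul, mul_assoc]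
      congr 1
      field_simp
    have hperm : ι ℝ vV * ι ℝ ivV * ι ℝ τV * ι ℝ γV
        = ι ℝ τV * ι ℝ γV * ι ℝ vV * ι ℝ ivV := by
      rw [aux_pair_comm vV ivV τV, mul_assoc, aux_pair_comm vV ivV γV, ← mul_assoc, ← mul_assoc,
        mul_assoc (ι ℝ τV * ι ℝ γV)]
    rw [hcalc, ← mul_assoc, ← mul_assoc, hperm, ← neg_smul, mul_assoc (ι ℝ τV * ι ℝ γV)]
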